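/- Let (k_n) be a sequence of positive reals with k_n³ ≥ n for all n. Then the ratio 38.5·n^{5/2}·√(log₂ n) / (2√2·k_n³·n² + k_n^{3/2}·n^{5/2}) tends to 0 as n → ∞. That is, when the cube of the kernel size exceeds the image size, FFT-based convolution has asymptotically smaller data movement cost than spatial convolution. -/

import Mathlib

open Filter Real

lemma aux_logb_div : Tendsto (fun n : ℕ => Real.logb 2 (n : ℝ) / (n : ℝ)) atTop (nhds 0) := by
  have h1 : Tendsto (fun x : ℝ => Real.log x / x) atTop (nhds 0) :=
    Real.isLittleO_log_id_atTop.tendsto_div_nhds_zero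
  have h2 : Tendsto (fun x : ℝ => Real.logb 2 x / x) atTop (nhds 0) := by
    have := h1.div_const (Real.log 2)
    simp only [zero_div] at this
    refine this.congr (fun x => ?_)
    rw [Real.logb]
    ring
  exact h2.comp tendsto_natCast_atTop_atTop

theorem dmc_fft_beats_conv (k : ℕ → ℝ) (hk : ∀ n, 0 < k n)
    (hk3 : ∀ n : ℕ, (n : ℝ) ≤ (k n) ^ 3) :
    Tendsto (fun n : ℕ =>
      38.5 * (n : ℝ) ^ ((5 : ℝ) / 2) * Real.sqrt (Real.logb 2 (n : ℝ))
        / (2 * Real.sqrt 2 * (k n) ^ 3 * (n : ℝ) ^ 2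
            + (k n) ^ ((3 : ℝ) / 2) * (n : ℝ) ^ ((5 : ℝ) / 2)))
      atTop (nhds 0) := by
  have hg : Tendsto (fun n : ℕ => 38.5 / (2 * Real.sqrt 2) *
      Real.sqrt (Real.logb 2 (n : ℝ) / (n : ℝ))) atTop (nhds 0) := by
    have := ((Real.continuous_sqrt.tendsto 0).comp aux_logb_div).const_mul
      (38.5 / (2 * Real.sqrt 2))
    simpa using this
  refine squeeze_zero' ?_ ?_ hg
  · filter_upwards [eventually_ge_atTop 1] with n hn
    have hnpos : (0:ℝ) < n := by exact_mod_cast hn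
    have hD : (0:ℝ) < 2 * Real.sqrt 2 * (k n) ^ 3 * (n : ℝ) ^ 2
        + (k n) ^ ((3 : ℝ) / 2) * (n : ℝ) ^ ((5 : ℝ) / 2) := by
      have h1 : (0:ℝ) < 2 * Real.sqrt 2 * (k n) ^ 3 * (n : ℝ) ^ 2 :=
        mul_pos (mul_pos (mul_pos two_pos (Real.sqrt_pos.mpr two_pos))
          (pow_pos (hk n) 3)) (pow_pos hnpos 2)
      have h2 : (0:ℝ) ≤ (k n) ^ ((3 : ℝ) / 2) * (n : ℝ) ^ ((5 : ℝ) / 2) :=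
        mul_nonneg (Real.rpow_nonneg (hk n).le _) (Real.rpow_nonneg hnpos.le _)
      linarith
    positivity
  · filter_upwards [eventually_ge_atTop 2] with n hn
    have hn1 : (1:ℝ) ≤ n := by exact_mod_cast Nat.one_le_of_lt hn
    have hnpos : (0:ℝ) < n := by linarith
    have hL : (0:ℝ) ≤ Real.logb 2 (n : ℝ) := by
      apply Real.logb_nonneg one_lt_two hn1
    set L := Real.logb 2 (n : ℝ)
    have hs2 : (0:ℝ) < Real.sqrt 2 := Real.sqrt_pos.mpr two_pos
    have hD' : (0:ℝ) < 2 * Real.sqrt 2 * (n : ℝ) ^ 3 :=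
      mul_pos (mul_pos two_pos hs2) (pow_pos hnpos 3)
    have hDge : 2 * Real.sqrt 2 * (n : ℝ) ^ 3 ≤
        2 * Real.sqrt 2 * (k n) ^ 3 * (n : ℝ) ^ 2
          + (k n) ^ ((3 : ℝ) / 2) * (n : ℝ) ^ ((5 : ℝ) / 2) := by
      have h2 : (0:ℝ) ≤ (k n) ^ ((3 : ℝ) / 2) * (n : ℝ) ^ ((5 : ℝ) / 2) :=
        mul_nonneg (Real.rpow_nonneg (hk n).le _) (Real.rpow_nonneg hnpos.le _)
      have h3 : 2 * Real.sqrt 2 * (n : ℝ) ^ 3 ≤ 2 * Real.sqrt 2 * (k n) ^ 3 * (n : ℝ) ^ 2 := by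
        have : (n:ℝ) * (n:ℝ)^2 ≤ (k n)^3 * (n:ℝ)^2 :=
          mul_le_mul_of_nonneg_right (hk3 n) (by positivity)
        calc 2 * Real.sqrt 2 * (n : ℝ) ^ 3 = 2 * Real.sqrt 2 * ((n:ℝ) * (n:ℝ)^2) := by ring
          _ ≤ 2 * Real.sqrt 2 * ((k n)^3 * (n:ℝ)^2) := by
              exact mul_le_mul_of_nonneg_left this (by positivity)
          _ = 2 * Real.sqrt 2 * (k n) ^ 3 * (n : ℝ) ^ 2 := by ring
      linarith
    have hN : (0:ℝ) ≤ 38.5 * (n : ℝ) ^ ((5 : ℝ) / 2) * Real.sqrt L := by positivity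
    have step1 : 38.5 * (n : ℝ) ^ ((5 : ℝ) / 2) * Real.sqrt L
        / (2 * Real.sqrt 2 * (k n) ^ 3 * (n : ℝ) ^ 2
            + (k n) ^ ((3 : ℝ) / 2) * (n : ℝ) ^ ((5 : ℝ) / 2))
        ≤ 38.5 * (n : ℝ) ^ ((5 : ℝ) / 2) * Real.sqrt L / (2 * Real.sqrt 2 * (n : ℝ) ^ 3) :=
      div_le_div_of_nonneg_left hN hD' hDge
    refine step1.trans (le_of_eq ?_)
    rw [Real.sqrt_div hL]
    have hpow : (n : ℝ) ^ ((5 : ℝ) / 2) / (n : ℝ) ^ 3 = ((n:ℝ) ^ ((1:ℝ)/2))⁻¹ := by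
      rw [← Real.rpow_natCast (n:ℝ) 3, ← Real.rpow_sub hnpos, ← Real.rpow_neg_one,
        ← Real.rpow_mul hnpos.le]
      norm_num
    have hsqrtn : Real.sqrt (n:ℝ) = (n:ℝ) ^ ((1:ℝ)/2) := Real.sqrt_eq_rpow _
    rw [hsqrtn]
    have key : (n:ℝ) ^ ((5:ℝ)/2) * (n:ℝ) ^ ((1:ℝ)/2) = (n:ℝ) ^ 3 := by
      rw [← Real.rpow_add hnpos, ← Real.rpow_natCast (n:ℝ) 3]
      norm_num
    field_simp
    linear_combination (Real.sqrt L) * key
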